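/- Let X be a proper geodesic metric space, γ a D-contracting geodesic, and [x,y] a geodesic segment with d_γ(x,y) ≥ D. Let N be the open D-neighborhood of γ and S = [x,y] ∩ closure(N). Then S is nonempty and 3D-coarsely connected, i.e., there is no subsegment of [x,y] of length greater than 3D meeting closure(N) exactly at its two endpoints. -/
import Mathlib


open Metric Set

variable {X : Type*} [MetricSpace X]

/-- Nearest-point projection of the point `x` to the set `A`. -/
noncomputable def proj (A : Set X) (x : X) : Set X :=
  {a | a ∈ A ∧ dist x a = infDist x A}

/-- Nearest-point projection of the set `B` to the set `A`. -/
noncomputable def projSet (A B : Set X) : Set X := ⋃ x ∈ B, proj A x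

/-- Distance between two subsets of a metric space. -/
noncomputable def setDist (A B : Set X) : ℝ := sInf (Set.image2 dist A B)

/-- `γ` is a geodesic segment from `x` to `y` (image of a unit-speed parameterization). -/
def IsGeodesicSeg (γ : Set X) (x y : X) : Prop :=
  ∃ (f : ℝ → X) (L : ℝ), 0 ≤ L ∧
    (∀ s ∈ Icc 0 L, ∀ t ∈ Icc 0 L, dist (f s) (f t) = |s - t|) ∧
    f 0 = x ∧ f L = y ∧ γ = f '' Icc 0 L

/-- `γ` is a geodesic segment. -/
def IsGeodesic (γ : Set X) : Prop := ∃ x y, IsGeodesicSeg γ x y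

/-- `γ` is `D`-contracting: any geodesic at distance `> D` from `γ`
projects onto `γ` with diameter `< D`. -/
def IsContractingSet (D : ℝ) (γ : Set X) : Prop :=
  ∀ κ : Set X, IsGeodesic κ → D < setDist γ κ → diam (projSet γ κ) < D

/-- `X` is a geodesic metric space. -/
def GeodesicSpace (X : Type*) [MetricSpace X] : Prop :=
  ∀ x y : X, ∃ γ : Set X, IsGeodesicSeg γ x y

lemma isGeodesic_compact {γ : Set X} (h : IsGeodesic γ) : IsCompact γ := by
  obtain ⟨x, y, f, L, hL, hf, -, -, rfl⟩ := h
  refine isCompact_Icc.image_of_continuousOn ?_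
  refine (LipschitzOnWith.of_dist_le_mul (K := 1) fun s hs t ht => ?_).continuousOn
  rw [hf s hs t ht, Real.dist_eq]
  simp

lemma isGeodesic_nonempty {γ : Set X} (h : IsGeodesic γ) : γ.Nonempty := by
  obtain ⟨x, y, f, L, hL, hf, -, -, rfl⟩ := h
  exact ⟨f 0, 0, ⟨le_refl 0, hL⟩, rfl⟩

lemma proj_nonempty {γ : Set X} (hc : IsCompact γ) (hne : γ.Nonempty) (z : X) :
    (proj γ z).Nonempty := by
  obtain ⟨p, hp, hd⟩ := hc.exists_infDist_eq_dist hne z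
  exact ⟨p, hp, hd.symm⟩

lemma mem_closure_nbhd_iff (hX : GeodesicSpace X) {D : ℝ} (hD : 0 < D)
    {γ : Set X} (hc : IsCompact γ) (hne : γ.Nonempty) (z : X) :
    z ∈ closure {w : X | infDist w γ < D} ↔ infDist z γ ≤ D := by
  constructor
  · intro h
    have hcl : IsClosed {w : X | infDist w γ ≤ D} :=
      isClosed_le (continuous_infDist_pt γ) continuous_const
    have hsub : {w : X | infDist w γ < D} ⊆ {w : X | infDist w γ ≤ D} :=
      fun w hw => le_of_lt (show infDist w γ < D from hw)
    exact closure_minimal hsub hcl h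
  · intro h
    rcases lt_or_eq_of_le h with h | h
    · exact subset_closure h
    · obtain ⟨p, hp, hd⟩ := hc.exists_infDist_eq_dist hne z
      obtain ⟨g, gf, M, hM0, hgf, hg0, hgM, rfl⟩ := hX z p
      have hM : M = D := by
        have := hgf 0 ⟨le_refl 0, hM0⟩ M ⟨hM0, le_refl M⟩
        rw [hg0, hgM, zero_sub, abs_neg, abs_of_nonneg hM0] at this
        rw [← this, ← hd, h]
      rw [Metric.mem_closure_iff]
      intro ε hε
      refine ⟨gf (min (ε/2) M), ?_, ?_⟩
      · have ht : min (ε/2) M ∈ Icc 0 M := ⟨le_min (by linarith) (by linarith [hM ▸ hD]), min_le_right _ _⟩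
        have hdp : dist (gf (min (ε/2) M)) p = M - min (ε/2) M := by
          have := hgf (min (ε/2) M) ht M ⟨hM0, le_refl M⟩
          rw [hgM] at this
          rw [this, abs_of_nonpos (by linarith [min_le_right (ε/2) M]), neg_sub]
        have h1 : infDist (gf (min (ε/2) M)) γ ≤ M - min (ε/2) M :=
          hdp ▸ infDist_le_dist_of_mem hp
        have h2 : 0 < min (ε/2) M := lt_min (by linarith) (hM ▸ hD)
        show infDist _ γ < D
        calc infDist (gf (min (ε/2) M)) γ ≤ M - min (ε/2) M := h1
          _ < M := by linarith
          _ = D := hM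
      · have := hgf 0 ⟨le_refl 0, hM0⟩ (min (ε/2) M) ⟨le_min (by linarith) (by linarith [hM ▸ hD]), min_le_right _ _⟩
        rw [hg0] at this
        rw [this, zero_sub, abs_neg, abs_of_nonneg (le_min (by linarith) (by linarith [hM ▸ hD]))]
        have := min_le_left (ε/2) M
        linarith

lemma setDist_lt {γ κ : Set X} {D : ℝ} (hκc : IsCompact κ) (hκne : κ.Nonempty)
    (hγne : γ.Nonempty) (h : ∀ q ∈ κ, D < infDist q γ) : D < setDist γ κ := by
  obtain ⟨q0, hq0, hmin0⟩ := hκc.exists_isMinOn hκne (continuous_infDist_pt γ).continuousOn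
  have h1 : D < infDist q0 γ := h q0 hq0
  have h2 : infDist q0 γ ≤ setDist γ κ := by
    apply le_csInf ⟨dist hγne.some hκne.some, mem_image2_of_mem hγne.some_mem hκne.some_mem⟩
    rintro r ⟨a, ha, b, hb, rfl⟩
    calc infDist q0 γ ≤ infDist b γ := hmin0 hb
      _ ≤ dist b a := infDist_le_dist_of_mem ha
      _ = dist a b := dist_comm b a
  linarith

/-- for a geodesic `[x,y]` with `d_γ(x,y) ≥ D`, the intersection of
`[x,y]` with the closure of the open `D`-neighborhood of `γ` is nonempty and
`3D`-coarsely connected. -/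
theorem stmt1 {X : Type*} [MetricSpace X] [ProperSpace X]
    (hX : GeodesicSpace X) (D : ℝ) (hD : 0 < D) (γ : Set X)
    (hγ : IsGeodesic γ) (hcon : IsContractingSet D γ)
    (x y : X) (f : ℝ → X) (L : ℝ) (hL : 0 ≤ L)
    (hf : ∀ s ∈ Icc 0 L, ∀ t ∈ Icc 0 L, dist (f s) (f t) = |s - t|)
    (hx : f 0 = x) (hy : f L = y)
    (hfar : D ≤ diam (proj γ x ∪ proj γ y)) :
    (f '' Icc 0 L ∩ closure {z | infDist z γ < D}).Nonempty ∧
    ∀ a b : ℝ, a ∈ Icc 0 L → b ∈ Icc 0 L → a ≤ b →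
      f a ∈ closure {z | infDist z γ < D} → f b ∈ closure {z | infDist z γ < D} →
      (∀ t ∈ Ioo a b, f t ∉ closure {z | infDist z γ < D}) →
      b - a ≤ 3 * D := by
  have hγc := isGeodesic_compact hγ
  have hγne := isGeodesic_nonempty hγ
  have hγb : Bornology.IsBounded γ := hγc.isBounded
  have hclos : ∀ z : X, z ∈ closure {w : X | infDist w γ < D} ↔ infDist z γ ≤ D :=
    fun z => mem_closure_nbhd_iff hX hD hγc hγne z
  have hsubγ : ∀ B : Set X, projSet γ B ⊆ γ := by
    rintro B p hp
    simp only [projSet, mem_iUnion] at hp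
    obtain ⟨_, _, hp, -⟩ := hp
    exact hp
  constructor
  · by_contra hempty
    rw [Set.not_nonempty_iff_eq_empty] at hempty
    have hgt : ∀ q ∈ f '' Icc 0 L, D < infDist q γ := by
      rintro q ⟨t, ht, rfl⟩
      by_contra hle
      push_neg at hle
      have h1 : f t ∈ closure {z : X | infDist z γ < D} := (hclos _).2 hle
      have h2 : f t ∈ f '' Icc 0 L ∩ closure {z : X | infDist z γ < D} := ⟨⟨t, ht, rfl⟩, h1⟩
      rw [hempty] at h2
      exact h2
    have hκgeo : IsGeodesic (f '' Icc 0 L) := ⟨x, y, f, L, hL, hf, hx, hy, rfl⟩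
    have hsd := setDist_lt (isGeodesic_compact hκgeo) (isGeodesic_nonempty hκgeo) hγne hgt
    have hdiam := hcon _ hκgeo hsd
    have hsub : proj γ x ∪ proj γ y ⊆ projSet γ (f '' Icc 0 L) := by
      rintro p (hp | hp)
      · exact mem_biUnion ⟨0, ⟨le_refl 0, hL⟩, hx⟩ hp
      · exact mem_biUnion ⟨L, ⟨hL, le_refl L⟩, hy⟩ hp
    have := diam_mono hsub (hγb.subset (hsubγ _))
    linarith
  · intro a b ha hb hab hfa hfb hgap
    by_contra hcon3
    push_neg at hcon3
    set ε := b - a - 3*D with hε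
    have hε0 : 0 < ε := by simp only [hε]; linarith
    set δ := ε/5 with hδ
    have hδ0 : 0 < δ := by positivity
    set a' := a + δ with ha'
    set b' := b - δ with hb'
    have hab' : a' < b' := by simp only [ha', hb', hδ]; linarith
    have ha'I : a' ∈ Icc (0:ℝ) L := ⟨by linarith [ha.1], by linarith [hb.2]⟩
    have hb'I : b' ∈ Icc (0:ℝ) L := ⟨by linarith [ha.1], by linarith [hb.2]⟩
    set M := b' - a' with hM
    have hM0 : 0 ≤ M := by linarith
    set g : ℝ → X := fun s => f (a' + s) with hg
    have hmemL : ∀ s ∈ Icc 0 M, a' + s ∈ Icc 0 L := by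
      intro s hs
      exact ⟨by linarith [ha'I.1, hs.1], by linarith [hb'I.2, hs.2]⟩
    have hmemIoo : ∀ s ∈ Icc 0 M, a' + s ∈ Ioo a b := by
      intro s hs
      constructor
      · simp only [ha']; linarith [hs.1]
      · have : a' + s ≤ b' := by linarith [hs.2]
        simp only [hb'] at this; linarith
    have hgf : ∀ s ∈ Icc 0 M, ∀ t ∈ Icc 0 M, dist (g s) (g t) = |s - t| := by
      intro s hs t ht
      have := hf (a' + s) (hmemL s hs) (a' + t) (hmemL t ht)
      simpa using this
    have hg0 : g 0 = f a' := by simp [hg]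
    have hgM : g M = f b' := by simp only [hg, hM]; norm_num
    have hκgeo : IsGeodesic (g '' Icc 0 M) := ⟨f a', f b', g, M, hM0, hgf, hg0, hgM, rfl⟩
    have hgt : ∀ q ∈ g '' Icc 0 M, D < infDist q γ := by
      rintro q ⟨s, hs, rfl⟩
      by_contra hle
      push_neg at hle
      exact hgap _ (hmemIoo s hs) ((hclos _).2 hle)
    have hsd := setDist_lt (isGeodesic_compact hκgeo) (isGeodesic_nonempty hκgeo) hγne hgt
    have hdiam := hcon _ hκgeo hsd
    obtain ⟨p', hp'γ, hp'd⟩ := proj_nonempty hγc hγne (f a')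
    obtain ⟨q', hq'γ, hq'd⟩ := proj_nonempty hγc hγne (f b')
    have hfa' : f a' ∈ g '' Icc 0 M := ⟨0, ⟨le_refl 0, hM0⟩, hg0⟩
    have hfb' : f b' ∈ g '' Icc 0 M := ⟨M, ⟨hM0, le_refl M⟩, hgM⟩
    have hp'mem : p' ∈ projSet γ (g '' Icc 0 M) := mem_biUnion hfa' ⟨hp'γ, hp'd⟩
    have hq'mem : q' ∈ projSet γ (g '' Icc 0 M) := mem_biUnion hfb' ⟨hq'γ, hq'd⟩
    have hpq : dist p' q' ≤ diam (projSet γ (g '' Icc 0 M)) :=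
      dist_le_diam_of_mem (hγb.subset (hsubγ _)) hp'mem hq'mem
    have hda : dist (f a') (f a) = δ := by
      rw [hf a' ha'I a ha]
      simp [ha', abs_of_nonneg hδ0.le]
    have hdb : dist (f b') (f b) = δ := by
      rw [hf b' hb'I b hb]
      simp only [hb']
      rw [abs_of_nonpos (by linarith)]
      ring
    have hia : infDist (f a') γ ≤ D + δ := by
      calc infDist (f a') γ ≤ infDist (f a) γ + dist (f a') (f a) :=
            infDist_le_infDist_add_dist
        _ ≤ D + δ := by rw [hda]; linarith [(hclos (f a)).1 hfa]
    have hib : infDist (f b') γ ≤ D + δ := by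
      calc infDist (f b') γ ≤ infDist (f b) γ + dist (f b') (f b) :=
            infDist_le_infDist_add_dist
        _ ≤ D + δ := by rw [hdb]; linarith [(hclos (f b)).1 hfb]
    have hdab : dist (f a') (f b') = b' - a' := by
      rw [hf a' ha'I b' hb'I, abs_of_nonpos (by linarith), neg_sub]
    have htri : dist (f a') (f b') ≤ dist (f a') p' + dist p' q' + dist q' (f b') :=
      dist_triangle4 _ _ _ _
    rw [hdab, hp'd] at htri
    have hq'' : dist q' (f b') = infDist (f b') γ := by rw [dist_comm]; exact hq'd
    rw [hq''] at htri
    have hfinal : b' - a' ≤ (D + δ) + dist p' q' + (D + δ) := by linarith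
    simp only [hb', ha'] at hfinal
    have : δ = ε/5 := hδ
    linarith
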